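/- Fix disagreement bounds δ_{z,z',a,a'} ∈ [0,1], let 𝒫*_DB be the set of primitive distributions satisfying IV validity, policy monotonicity, and P*(D(z,a)=0, D(z',a')=1) ≤ δ_{z,z',a,a'} · P*(D(z',a')=1) for all z, z', a, a', let ℛ* be a convex set of collections of pmfs on 𝒴² × {0,1}², and let 𝒫* be the set of P* ∈ 𝒫*_DB whose collection of marginal pmfs lies in ℛ*. Then Θ_I(P; 𝒫*) is a convex subset of ℝ (an interval), its supremum equals the supremum of Σ_{z∈𝒵} P(Z=z) · Σ_{(y0,y1,d0,d1)} (d1·y1 + (1−d1)·y0) · π_z(y0,y1,d0,d1) over collections {π_z}_{z∈𝒵} ∈ ℛ* satisfying consistency with policy monotonicity (π_z(y0,y1,1,0) = 0 for all y0, y1, z), the data-matching, common-marginal, and pmf conditions (conditions 1–3), and the disagreement-bound inequalities Σ_{(y0,y1)} min{π(y0,y1,D(z,a)=1), π(y0,y1,D(z',a')=1)} ≥ (1 − δ_{z,z',a,a'}) · π(D(z',a')=1) for all z, z', a, a' (condition 4); and its infimum equals the analogous infimum. -/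

import Mathlib

open Finset
open scoped Classical

namespace IVPol

/-- Sample space of model primitives `(Y(0), Y(1), D(·,·), Z)`:
a point records the two potential outcomes (elements of the finite outcome set `Y ⊆ ℝ`),
the potential treatments `D(z, a) ∈ {0,1}` for every judge `z` and policy `a`,
and the instrument value `Z`. -/
abbrev Prim (Y : Finset ℝ) (K : ℕ) := Y × Y × (Fin K → Bool → Bool) × Fin K

/-- Sample space of the observed data `(Y, D, Z)`. -/
abbrev Obs (Y : Finset ℝ) (K : ℕ) := Y × Bool × Fin K

/-- A probability distribution on a finite type, given by its pmf. -/
structure Dist (α : Type*) [Fintype α] where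
  p : α → ℝ
  nonneg : ∀ a, 0 ≤ p a
  sum_one : ∑ a, p a = 1

/-- Probability of an event. -/
noncomputable def Dist.pr {α : Type*} [Fintype α] (P : Dist α) (A : Set α) : ℝ :=
  ∑ a, if a ∈ A then P.p a else 0

/-- Expectation of a real-valued random variable. -/
noncomputable def Dist.exp {α : Type*} [Fintype α] (P : Dist α) (f : α → ℝ) : ℝ :=
  ∑ a, P.p a * f a

variable {Y : Finset ℝ} {K : ℕ}

/-- Potential treatment `D(z, a)`. -/
def pd (ω : Prim Y K) (z : Fin K) (a : Bool) : Bool := ω.2.2.1 z a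

/-- The instrument `Z`. -/
def pz (ω : Prim Y K) : Fin K := ω.2.2.2

/-- Observed treatment `D = D(Z, 0)`. -/
def obsD (ω : Prim Y K) : Bool := pd ω (pz ω) false

/-- Observed outcome `Y = Y(D(Z, 0))`. -/
def obsY (ω : Prim Y K) : Y := if obsD ω then ω.2.1 else ω.1

/-- Counterfactual outcome `Y(D(Z, 1))`. -/
noncomputable def cfY (ω : Prim Y K) : ℝ :=
  if pd ω (pz ω) true then (ω.2.1 : ℝ) else (ω.1 : ℝ)

/-- IV validity: `(Y(0), Y(1), D(·,·))` is independent of `Z`. -/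
def IVvalid (Ps : Dist (Prim Y K)) : Prop :=
  ∀ (a b : Y) (g : Fin K → Bool → Bool) (z : Fin K),
    Ps.pr {ω | ω.1 = a ∧ ω.2.1 = b ∧ ω.2.2.1 = g ∧ ω.2.2.2 = z}
      = Ps.pr {ω | ω.1 = a ∧ ω.2.1 = b ∧ ω.2.2.1 = g} * Ps.pr {ω | ω.2.2.2 = z}

/-- `Ps` generates the observed data distribution `P`:
the law of `(Y(D(Z,0)), D(Z,0), Z)` under `Ps` is `P`. -/
def generates (Ps : Dist (Prim Y K)) (P : Dist (Obs Y K)) : Prop :=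
  ∀ (y : Y) (d : Bool) (z : Fin K),
    P.p (y, d, z) = Ps.pr {ω | obsY ω = y ∧ obsD ω = d ∧ pz ω = z}

/-- Marginal pmf of judge `z`:
`π_z(y0, y1, d0, d1) = P*(Y(0)=y0, Y(1)=y1, D(z,0)=d0, D(z,1)=d1)`. -/
noncomputable def marginal (Ps : Dist (Prim Y K)) (z : Fin K) (y0 y1 : Y) (d0 d1 : Bool) : ℝ :=
  Ps.pr {ω | ω.1 = y0 ∧ ω.2.1 = y1 ∧ pd ω z false = d0 ∧ pd ω z true = d1}

/-- Probability of `Z = z` under the observed distribution. -/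
noncomputable def prZ (P : Dist (Obs Y K)) (z : Fin K) : ℝ := P.pr {o | o.2.2 = z}

/-- Conditional probability `P(Y = y, D = d | Z = z)` of the observed data. -/
noncomputable def obsCond (P : Dist (Obs Y K)) (y : Y) (d : Bool) (z : Fin K) : ℝ :=
  P.p (y, d, z) / prZ P z

/-- A collection of candidate marginal pmfs, one for each judge. -/
abbrev Coll (Y : Finset ℝ) (K : ℕ) := Fin K → Y → Y → Bool → Bool → ℝ

/-- The collection of marginal pmfs of a primitive distribution. -/
noncomputable def marginalColl (Ps : Dist (Prim Y K)) : Coll Y K :=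
  fun z y0 y1 d0 d1 => marginal Ps z y0 y1 d0 d1

/-- Policy monotonicity: `D(z,1) ≥ D(z,0)` almost surely, for every judge `z`. -/
def policyMono (Ps : Dist (Prim Y K)) : Prop :=
  ∀ z : Fin K, Ps.pr {ω | pd ω z false ≤ pd ω z true} = 1

/-- The disagreement bounds `P*(D(z,a)=0, D(z',a')=1) ≤ δ_{z,z',a,a'} · P*(D(z',a')=1)`. -/
def disagBound (δ : Fin K → Fin K → Bool → Bool → ℝ) (Ps : Dist (Prim Y K)) : Prop :=
  ∀ (z z' : Fin K) (a a' : Bool),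
    Ps.pr {ω | pd ω z a = false ∧ pd ω z' a' = true}
      ≤ δ z z' a a' * Ps.pr {ω | pd ω z' a' = true}

/-- `π(y0, y1, D(z,a)=1)`: the implied mass of `{Y(0)=y0, Y(1)=y1, D(z,a)=1}`. -/
def margD1 (π : Coll Y K) (z : Fin K) (a : Bool) (y0 y1 : Y) : ℝ :=
  ∑ d0 : Bool, ∑ d1 : Bool,
    if (if a then d1 else d0) = true then π z y0 y1 d0 d1 else 0

/-- `π(D(z,a)=1)`: the implied mass of `{D(z,a)=1}`. -/
def margD1tot (π : Coll Y K) (z : Fin K) (a : Bool) : ℝ :=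
  ∑ y0 : Y, ∑ y1 : Y, margD1 π z a y0 y1

/-- Conditions (1)–(4): data matching, common potential-outcome marginal, validity
of the pmfs, and the disagreement-bound inequalities; together with consistency with
policy monotonicity. -/
def dbConstraints [NeZero K] (δ : Fin K → Fin K → Bool → Bool → ℝ)
    (P : Dist (Obs Y K)) (π : Coll Y K) : Prop :=
  (∀ (z : Fin K) (y0 y1 : Y), π z y0 y1 true false = 0) ∧
  (∀ (y : Y) (z : Fin K),
      obsCond P y true z = ∑ y0 : Y, ∑ d1 : Bool, π z y0 y true d1) ∧
  (∀ (y : Y) (z : Fin K),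
      obsCond P y false z = ∑ y1 : Y, ∑ d1 : Bool, π z y y1 false d1) ∧
  (∀ (y0 y1 : Y) (z : Fin K),
      ∑ d0 : Bool, ∑ d1 : Bool, π z y0 y1 d0 d1
        = ∑ d0 : Bool, ∑ d1 : Bool, π 0 y0 y1 d0 d1) ∧
  (∀ (z : Fin K) (y0 y1 : Y) (d0 d1 : Bool), 0 ≤ π z y0 y1 d0 d1) ∧
  (∀ z : Fin K, ∑ y0 : Y, ∑ y1 : Y, ∑ d0 : Bool, ∑ d1 : Bool, π z y0 y1 d0 d1 = 1) ∧
  (∀ (z z' : Fin K) (a a' : Bool),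
      ∑ y0 : Y, ∑ y1 : Y, min (margD1 π z a y0 y1) (margD1 π z' a' y0 y1)
        ≥ (1 - δ z z' a a') * margD1tot π z' a')

/-- The linear-programming objective
`∑_z P(Z=z) ∑_{y0,y1,d0,d1} (d1·y1 + (1−d1)·y0) · π_z(y0,y1,d0,d1)`. -/
noncomputable def objective (P : Dist (Obs Y K)) (π : Coll Y K) : ℝ :=
  ∑ z : Fin K, prZ P z *
    ∑ y0 : Y, ∑ y1 : Y, ∑ d0 : Bool, ∑ d1 : Bool,
      (if d1 then (y1 : ℝ) else (y0 : ℝ)) * π z y0 y1 d0 d1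

/-- Average counterfactual outcome `θ = E[Y(D(Z,1))]`. -/
noncomputable def theta (Ps : Dist (Prim Y K)) : ℝ := Ps.exp cfY

/-- The identified set for the average counterfactual outcome. -/
def ThetaI (P : Dist (Obs Y K)) (fam : Set (Dist (Prim Y K))) : Set ℝ :=
  {t | ∃ Ps ∈ fam, generates Ps P ∧ theta Ps = t}


section Aux
-- basic pr lemmas
lemma pr_nonneg {α : Type*} [Fintype α] (P : Dist α) (A : Set α) : 0 ≤ P.pr A := by
  refine Finset.sum_nonneg fun a _ => ?_
  split
  · exact P.nonneg a
  · exact le_rfl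

lemma pr_univ {α : Type*} [Fintype α] (P : Dist α) : P.pr Set.univ = 1 := by
  simp [Dist.pr, P.sum_one]

lemma pr_singleton {α : Type*} [Fintype α] (P : Dist α) (a : α) : P.pr {a} = P.p a := by
  simp [Dist.pr, Set.mem_singleton_iff, Finset.sum_ite_eq' Finset.univ a P.p]

-- split a sum of indicator form
lemma sum_split {α : Type*} [Fintype α] (A B : α → Prop) (f : α → ℝ) :
    (∑ a, if A a then f a else 0)
      = (∑ a, if A a ∧ B a then f a else 0) + (∑ a, if A a ∧ ¬ B a then f a else 0) := by
  rw [← Finset.sum_add_distrib]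
  refine Finset.sum_congr rfl fun a _ => ?_
  by_cases hA : A a <;> by_cases hB : B a <;> simp [hA, hB]

-- the "next element" function
noncomputable def nxt (V : Finset ℝ) (v : ℝ) : ℝ :=
  if h : (V.filter (fun w => v < w)).Nonempty then (V.filter (fun w => v < w)).min' h else v

lemma nxt_lt (V : Finset ℝ) {v b : ℝ} (hb : b ∈ V) (hvb : v < b) : v < nxt V v ∧ nxt V v ≤ b ∧ nxt V v ∈ V := by
  have hne : (V.filter (fun w => v < w)).Nonempty := ⟨b, by simp [hb, hvb]⟩
  rw [nxt, dif_pos hne]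
  have hmem := (V.filter (fun w => v < w)).min'_mem hne
  simp only [Finset.mem_filter] at hmem
  exact ⟨hmem.2, Finset.min'_le _ b (by simp [hb, hvb]), hmem.1⟩

lemma nxt_le (V : Finset ℝ) {v w : ℝ} (hw : w ∈ V) (hvw : v < w) : nxt V v ≤ w := by
  have hne : (V.filter (fun u => v < u)).Nonempty := ⟨w, by simp [hw, hvw]⟩
  rw [nxt, dif_pos hne]
  exact Finset.min'_le _ w (by simp [hw, hvw])

/-- Telescoping sum of consecutive gaps. -/
lemma seg (V : Finset ℝ) : ∀ (n : ℕ) (a b : ℝ), (V.filter (fun v => a ≤ v ∧ v < b)).card ≤ n →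
    a ∈ V → b ∈ V → a ≤ b →
    ∑ v ∈ V.filter (fun v => a ≤ v ∧ v < b), (nxt V v - v) = b - a := by
  intro n
  induction n with
  | zero =>
    intro a b hcard ha hb hab
    rcases eq_or_lt_of_le hab with h | h
    · subst h
      rw [Finset.filter_false_of_mem (fun v hv => by push_neg; intro h1; linarith)]
      simp
    · exfalso
      have : a ∈ V.filter (fun v => a ≤ v ∧ v < b) := by simp [ha, le_refl, h]
      have := Finset.card_pos.mpr ⟨a, this⟩
      omega
  | succ n ih =>
    intro a b hcard ha hb hab
    rcases eq_or_lt_of_le hab with h | h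
    · subst h
      rw [Finset.filter_false_of_mem (fun v hv => by push_neg; intro h1; linarith)]
      simp
    · obtain ⟨hac, hcb, hcV⟩ := nxt_lt V hb h
      set c := nxt V a with hc
      have hfe : V.filter (fun v => a ≤ v ∧ v < b) = insert a (V.filter (fun v => c ≤ v ∧ v < b)) := by
        ext v
        simp only [Finset.mem_filter, Finset.mem_insert]
        constructor
        · rintro ⟨hv, hav, hvb⟩
          rcases eq_or_lt_of_le hav with h' | h'
          · exact Or.inl h'.symm
          · exact Or.inr ⟨hv, nxt_le V hv h', hvb⟩
        · rintro (rfl | ⟨hv, hcv, hvb⟩)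
          · exact ⟨ha, le_refl _, h⟩
          · exact ⟨hv, by linarith, hvb⟩
      have hanotin : a ∉ V.filter (fun v => c ≤ v ∧ v < b) := by
        simp only [Finset.mem_filter]; push_neg; intro _ h'; linarith
      have hcard' : (V.filter (fun v => c ≤ v ∧ v < b)).card ≤ n := by
        have := Finset.card_insert_of_notMem hanotin
        rw [← hfe] at this
        omega
      rw [hfe, Finset.sum_insert hanotin, ih c b hcard' hcV hb hcb]
      ring

lemma seg' (V : Finset ℝ) (a b : ℝ) (ha : a ∈ V) (hb : b ∈ V) (hab : a ≤ b) :
    ∑ v ∈ V.filter (fun v => a ≤ v ∧ v < b), (nxt V v - v) = b - a :=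
  seg V _ a b le_rfl ha hb hab


section Coupling
variable {K : ℕ}

/-- set of candidate threshold values -/
noncomputable def theV (p : Fin K → Bool → ℝ) (q : ℝ) : Finset ℝ :=
  insert 0 (insert q ((Finset.univ : Finset (Fin K × Bool)).image (fun i => p i.1 i.2)))

/-- treatment pattern at level `v` -/
noncomputable def gv (p : Fin K → Bool → ℝ) (v : ℝ) : Fin K → Bool → Bool :=
  fun z a => decide (v < p z a)

/-- the comonotone coupling weight of pattern `g` -/
noncomputable def cw (p : Fin K → Bool → ℝ) (q : ℝ) (g : Fin K → Bool → Bool) : ℝ :=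
  ∑ v ∈ (theV p q).filter (fun v => v < q), if g = gv p v then nxt (theV p q) v - v else 0

variable {p : Fin K → Bool → ℝ} {q : ℝ}

lemma mem0V : (0:ℝ) ∈ theV p q := by simp [theV]
lemma memqV : q ∈ theV p q := by simp [theV]
lemma mempV (z : Fin K) (a : Bool) : p z a ∈ theV p q := by
  simp only [theV, Finset.mem_insert, Finset.mem_image]
  exact Or.inr (Or.inr ⟨(z, a), Finset.mem_univ _, rfl⟩)

variable (h0 : ∀ z a, 0 ≤ p z a) (hpq : ∀ z a, p z a ≤ q) (hq : 0 ≤ q)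

include h0 hq in
lemma memV_nonneg {v : ℝ} (hv : v ∈ theV p q) : 0 ≤ v := by
  simp only [theV, Finset.mem_insert, Finset.mem_image] at hv
  rcases hv with rfl | rfl | ⟨i, _, rfl⟩
  · exact le_rfl
  · exact hq
  · exact h0 i.1 i.2

lemma cw_nonneg (g : Fin K → Bool → Bool) : 0 ≤ cw p q g := by
  refine Finset.sum_nonneg fun v hv => ?_
  simp only [Finset.mem_filter] at hv
  split
  · have := (nxt_lt (theV p q) memqV hv.2).1
    linarith
  · exact le_rfl

/-- master collapse lemma -/
lemma cw_sum (C : (Fin K → Bool → Bool) → Prop) [DecidablePred C] :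
    (∑ g : Fin K → Bool → Bool, if C g then cw p q g else 0)
      = ∑ v ∈ (theV p q).filter (fun v => v < q), if C (gv p v) then nxt (theV p q) v - v else 0 := by
  unfold cw
  have h1 : ∀ g : Fin K → Bool → Bool,
      (if C g then ∑ v ∈ (theV p q).filter (fun v => v < q),
          (if g = gv p v then nxt (theV p q) v - v else 0) else 0)
        = ∑ v ∈ (theV p q).filter (fun v => v < q),
            (if C g then (if g = gv p v then nxt (theV p q) v - v else 0) else 0) := by
    intro g; split <;> simp
  simp_rw [h1]
  rw [Finset.sum_comm]
  refine Finset.sum_congr rfl fun v _ => ?_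
  have h2 : ∀ g : Fin K → Bool → Bool,
      (if C g then (if g = gv p v then nxt (theV p q) v - v else 0) else 0)
        = if g = gv p v then (if C (gv p v) then nxt (theV p q) v - v else 0) else 0 := by
    intro g
    by_cases h3 : g = gv p v
    · subst h3; simp
    · simp [h3]
  simp_rw [h2]
  rw [Finset.sum_ite_eq' Finset.univ (gv p v)]
  simp

include h0 hpq hq in
lemma cw_event (C : (Fin K → Bool → Bool) → Prop) [DecidablePred C] (a b : ℝ) (ha : a ∈ theV p q) (hb : b ∈ theV p q)
    (hab : a ≤ b)
    (hiff : ∀ v ∈ theV p q, (v < q ∧ C (gv p v)) ↔ (a ≤ v ∧ v < b)) :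
    (∑ g : Fin K → Bool → Bool, if C g then cw p q g else 0) = b - a := by
  rw [cw_sum, ← Finset.sum_filter, Finset.filter_filter,
    Finset.filter_congr (fun v hv => hiff v hv)]
  exact seg' _ a b ha hb hab

include h0 hpq hq in
lemma cw_total : (∑ g : Fin K → Bool → Bool, cw p q g) = q := by
  have h := cw_event h0 hpq hq (fun _ => True) 0 q mem0V memqV hq
    (fun v hv => ⟨fun h => ⟨memV_nonneg h0 hq hv, h.1⟩, fun h => ⟨h.2, trivial⟩⟩)
  simpa using h

include h0 hpq hq in
lemma cw_true (z : Fin K) (a : Bool) :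
    (∑ g : Fin K → Bool → Bool, if g z a = true then cw p q g else 0) = p z a := by
  have h := cw_event h0 hpq hq (fun g => g z a = true) 0 (p z a) mem0V (mempV z a) (h0 z a)
    (fun v hv => by
      simp only [gv, decide_eq_true_eq]
      exact ⟨fun h => ⟨memV_nonneg h0 hq hv, h.2⟩, fun h => ⟨lt_of_lt_of_le h.2 (hpq z a), h.2⟩⟩)
  simpa using h

include h0 hpq hq in
lemma cw_false (z : Fin K) (a : Bool) :
    (∑ g : Fin K → Bool → Bool, if g z a = false then cw p q g else 0) = q - p z a := by
  have h := cw_event h0 hpq hq (fun g => g z a = false) (p z a) q (mempV z a) memqV (hpq z a)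
    (fun v hv => by
      simp only [gv, decide_eq_false_iff_not, not_lt]
      exact ⟨fun h => ⟨h.2, h.1⟩, fun h => ⟨h.2, h.1⟩⟩)
  simpa using h

include h0 hpq hq in
lemma cw_tt (z : Fin K) (a : Bool) (z' : Fin K) (a' : Bool) :
    (∑ g : Fin K → Bool → Bool, if g z a = true ∧ g z' a' = true then cw p q g else 0)
      = min (p z a) (p z' a') := by
  have hminV : min (p z a) (p z' a') ∈ theV p q := by
    rcases le_total (p z a) (p z' a') with h | h
    · rw [min_eq_left h]; exact mempV z a
    · rw [min_eq_right h]; exact mempV z' a'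
  have h := cw_event h0 hpq hq (fun g => g z a = true ∧ g z' a' = true) 0
    (min (p z a) (p z' a')) mem0V hminV (le_min (h0 z a) (h0 z' a'))
    (fun v hv => by
      simp only [gv, decide_eq_true_eq, lt_min_iff]
      constructor
      · rintro ⟨_, h1, h2⟩; exact ⟨memV_nonneg h0 hq hv, h1, h2⟩
      · rintro ⟨_, h1, h2⟩; exact ⟨lt_of_lt_of_le h1 (hpq z a), h1, h2⟩)
  simpa using h

include h0 hpq hq in
lemma cw_ft (z : Fin K) (a : Bool) (z' : Fin K) (a' : Bool) :
    (∑ g : Fin K → Bool → Bool, if g z a = false ∧ g z' a' = true then cw p q g else 0)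
      = p z' a' - min (p z a) (p z' a') := by
  rcases le_total (p z a) (p z' a') with h | h
  · rw [min_eq_left h]
    exact cw_event h0 hpq hq _ (p z a) (p z' a') (mempV z a) (mempV z' a') h
      (fun v hv => by
        simp only [gv, decide_eq_false_iff_not, not_lt, decide_eq_true_eq]
        exact ⟨fun hx => ⟨hx.2.1, hx.2.2⟩,
          fun hx => ⟨lt_of_lt_of_le hx.2 (hpq z' a'), hx.1, hx.2⟩⟩)
  · rw [min_eq_right h, sub_self]
    have he := cw_event h0 hpq hq (fun g => g z a = false ∧ g z' a' = true)
      (p z' a') (p z' a') (mempV z' a') (mempV z' a') le_rfl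
      (fun v hv => by
        simp only [gv, decide_eq_false_iff_not, not_lt, decide_eq_true_eq]
        constructor
        · rintro ⟨_, h1, h2⟩; exact absurd (lt_of_lt_of_le h2 h) (not_lt.mpr h1)
        · rintro ⟨h1, h2⟩; exact absurd h2 (not_lt.mpr h1))
    simpa using he

include h0 hpq hq in
lemma cw_tf (z : Fin K) (a : Bool) (z' : Fin K) (a' : Bool) :
    (∑ g : Fin K → Bool → Bool, if g z a = true ∧ g z' a' = false then cw p q g else 0)
      = p z a - min (p z a) (p z' a') := by
  rcases le_total (p z' a') (p z a) with h | h
  · rw [min_eq_right h]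
    exact cw_event h0 hpq hq _ (p z' a') (p z a) (mempV z' a') (mempV z a) h
      (fun v hv => by
        simp only [gv, decide_eq_false_iff_not, not_lt, decide_eq_true_eq]
        exact ⟨fun hx => ⟨hx.2.2, hx.2.1⟩,
          fun hx => ⟨lt_of_lt_of_le hx.2 (hpq z a), hx.2, hx.1⟩⟩)
  · rw [min_eq_left h, sub_self]
    have he := cw_event h0 hpq hq (fun g => g z a = true ∧ g z' a' = false)
      (p z a) (p z a) (mempV z a) (mempV z a) le_rfl
      (fun v hv => by
        simp only [gv, decide_eq_false_iff_not, not_lt, decide_eq_true_eq]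
        constructor
        · rintro ⟨_, h1, h2⟩; exact absurd (lt_of_lt_of_le h1 h) (not_lt.mpr h2)
        · rintro ⟨h1, h2⟩; exact absurd h2 (not_lt.mpr h1))
    simpa using he

include h0 hpq hq in
lemma cw_ff (z : Fin K) (a : Bool) (z' : Fin K) (a' : Bool) :
    (∑ g : Fin K → Bool → Bool, if g z a = false ∧ g z' a' = false then cw p q g else 0)
      = q - max (p z a) (p z' a') := by
  have hmaxV : max (p z a) (p z' a') ∈ theV p q := by
    rcases le_total (p z a) (p z' a') with h | h
    · rw [max_eq_right h]; exact mempV z' a'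
    · rw [max_eq_left h]; exact mempV z a
  exact cw_event h0 hpq hq _ (max (p z a) (p z' a')) q hmaxV memqV
    (max_le (hpq z a) (hpq z' a'))
    (fun v hv => by
      simp only [gv, decide_eq_false_iff_not, not_lt, max_le_iff]
      exact ⟨fun hx => ⟨⟨hx.2.1, hx.2.2⟩, hx.1⟩, fun hx => ⟨hx.2, hx.1.1, hx.1.2⟩⟩)

end Coupling






section ProductForm
variable {Y : Finset ℝ} {K : ℕ}

lemma my_sum_ite_eq {β : Type*} [Fintype β] (b : β) {C : β → Prop} {i : ∀ x, Decidable (C x)}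
    (hC : ∀ x, C x ↔ x = b) (f : β → ℝ) :
    (∑ x : β, @ite _ (C x) (i x) (f x) 0) = f b := by
  rw [Finset.sum_eq_single b]
  · simp [hC]
  · intro x _ hx; simp [hC, hx]
  · intro hb; exact absurd (Finset.mem_univ b) hb

lemma sum_if_iff {α : Type*} [Fintype α] {A B : α → Prop} {i1 : ∀ a, Decidable (A a)}
    {i2 : ∀ a, Decidable (B a)} (h : ∀ a, A a ↔ B a) (f : α → ℝ) :
    (∑ a, @ite _ (A a) (i1 a) (f a) 0) = ∑ a, @ite _ (B a) (i2 a) (f a) 0 :=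
  Finset.sum_congr rfl fun a _ => if_congr (h a) rfl rfl

lemma sum_prZ (P : Dist (Obs Y K)) : ∑ z, prZ P z = 1 := by
  unfold prZ Dist.pr
  rw [Finset.sum_comm]
  trans (∑ o : Obs Y K, P.p o)
  · refine Finset.sum_congr rfl fun o _ => ?_
    exact my_sum_ite_eq o.2.2 (fun z => by simp [Set.mem_setOf_eq, eq_comm]) (fun _ => P.p o)
  · exact P.sum_one

lemma prZ_nonneg (P : Dist (Obs Y K)) (z : Fin K) : 0 ≤ prZ P z := pr_nonneg P _

/-- product form: the primitive distribution factorizes -/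
def prodForm (P : Dist (Obs Y K)) (Ps : Dist (Prim Y K))
    (ν : Y → Y → (Fin K → Bool → Bool) → ℝ) : Prop :=
  ∀ (y0 y1 : Y) (g : Fin K → Bool → Bool) (z : Fin K),
    Ps.p (y0, y1, g, z) = ν y0 y1 g * prZ P z

/-- the collection of marginals induced by a joint weight `ν` -/
noncomputable def piOf (ν : Y → Y → (Fin K → Bool → Bool) → ℝ) : Coll Y K :=
  fun z y0 y1 d0 d1 => ∑ g, if g z false = d0 ∧ g z true = d1 then ν y0 y1 g else 0

variable {P : Dist (Obs Y K)} {Ps : Dist (Prim Y K)} {ν : Y → Y → (Fin K → Bool → Bool) → ℝ}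

lemma pr_cyl (hf : prodForm P Ps ν) (Q : Y → Y → (Fin K → Bool → Bool) → Prop)
    [∀ y0 y1 g, Decidable (Q y0 y1 g)] :
    Ps.pr {ω | Q ω.1 ω.2.1 ω.2.2.1} = ∑ y0, ∑ y1, ∑ g, if Q y0 y1 g then ν y0 y1 g else 0 := by
  have hfac : ∀ (y0 y1 : Y) (g : Fin K → Bool → Bool) (z : Fin K),
      Ps.p (y0, y1, g, z) = ν y0 y1 g * prZ P z := hf
  unfold Dist.pr
  simp only [Fintype.sum_prod_type, Set.mem_setOf_eq]
  refine Finset.sum_congr rfl fun y0 _ => Finset.sum_congr rfl fun y1 _ =>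
    Finset.sum_congr rfl fun g _ => ?_
  by_cases hQ : Q y0 y1 g
  · simp only [hQ, if_true]
    rw [Finset.sum_congr rfl fun z _ => hfac y0 y1 g z, ← Finset.mul_sum, sum_prZ, mul_one]
  · simp [hQ]

lemma pr_cylz (hf : prodForm P Ps ν) (Q : Y → Y → (Fin K → Bool → Bool) → Prop)
    [∀ y0 y1 g, Decidable (Q y0 y1 g)] (z0 : Fin K) :
    Ps.pr {ω | Q ω.1 ω.2.1 ω.2.2.1 ∧ ω.2.2.2 = z0}
      = prZ P z0 * ∑ y0, ∑ y1, ∑ g, if Q y0 y1 g then ν y0 y1 g else 0 := by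
  have hfac : ∀ (y0 y1 : Y) (g : Fin K → Bool → Bool) (z : Fin K),
      Ps.p (y0, y1, g, z) = ν y0 y1 g * prZ P z := hf
  unfold Dist.pr
  simp only [Fintype.sum_prod_type, Set.mem_setOf_eq, Finset.mul_sum]
  refine Finset.sum_congr rfl fun y0 _ => Finset.sum_congr rfl fun y1 _ =>
    Finset.sum_congr rfl fun g _ => ?_
  by_cases hQ : Q y0 y1 g
  · rw [Finset.sum_eq_single z0 (fun x _ hx => by simp [hx]) (fun h => absurd (Finset.mem_univ z0) h)]
    simp [hQ, hfac y0 y1 g z0, mul_comm]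
  · simp [hQ]

lemma sum_nu_one (hf : prodForm P Ps ν) : ∑ y0, ∑ y1, ∑ g, ν y0 y1 g = 1 := by
  have hfac : ∀ (y0 y1 : Y) (g : Fin K → Bool → Bool) (z : Fin K),
      Ps.p (y0, y1, g, z) = ν y0 y1 g * prZ P z := hf
  have h := Ps.sum_one
  simp only [Fintype.sum_prod_type] at h
  simp only [hfac, ← Finset.mul_sum, sum_prZ, mul_one] at h
  exact h

lemma sum_collapse2 {G : Type*} [Fintype G] (y0 y1 : Y) (C : G → Prop) [iC : ∀ g, Decidable (C g)]
    (f : Y → Y → G → ℝ) [iA : ∀ (a b : Y) (g : G), Decidable (a = y0 ∧ b = y1 ∧ C g)] :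
    (∑ a : Y, ∑ b : Y, ∑ g : G, @ite _ (a = y0 ∧ b = y1 ∧ C g) (iA a b g) (f a b g) 0)
      = ∑ g : G, @ite _ (C g) (iC g) (f y0 y1 g) 0 := by
  rw [Finset.sum_eq_single y0]
  · rw [Finset.sum_eq_single y1]
    · refine Finset.sum_congr rfl fun g _ => ?_
      by_cases h : C g <;> simp [h]
    · intro b _ hb; exact Finset.sum_eq_zero fun g _ => by simp [hb]
    · intro h; exact absurd (Finset.mem_univ y1) h
  · intro a _ ha; exact Finset.sum_eq_zero fun b _ => Finset.sum_eq_zero fun g _ => by simp [ha]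
  · intro h; exact absurd (Finset.mem_univ y0) h

lemma sum_g_split (ν : Y → Y → (Fin K → Bool → Bool) → ℝ) (z : Fin K) (F : Bool → Bool → ℝ)
    (y0 y1 : Y) :
    (∑ g : Fin K → Bool → Bool, F (g z false) (g z true) * ν y0 y1 g)
      = ∑ d0 : Bool, ∑ d1 : Bool, F d0 d1 * piOf ν z y0 y1 d0 d1 := by
  unfold piOf
  simp only [Finset.mul_sum]
  symm
  calc (∑ d0 : Bool, ∑ d1 : Bool, ∑ g : Fin K → Bool → Bool,
          F d0 d1 * (if g z false = d0 ∧ g z true = d1 then ν y0 y1 g else 0))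
      = ∑ d0 : Bool, ∑ g : Fin K → Bool → Bool, ∑ d1 : Bool,
          F d0 d1 * (if g z false = d0 ∧ g z true = d1 then ν y0 y1 g else 0) :=
        Finset.sum_congr rfl fun d0 _ => Finset.sum_comm
    _ = ∑ g : Fin K → Bool → Bool, ∑ d0 : Bool, ∑ d1 : Bool,
          F d0 d1 * (if g z false = d0 ∧ g z true = d1 then ν y0 y1 g else 0) :=
        Finset.sum_comm
    _ = ∑ g : Fin K → Bool → Bool, F (g z false) (g z true) * ν y0 y1 g := by
        refine Finset.sum_congr rfl fun g _ => ?_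
        rcases h0 : g z false <;> rcases h1 : g z true <;>
          simp [Fintype.sum_bool, h0, h1]

lemma piOf_margD1 (z : Fin K) (a : Bool) (y0 y1 : Y) :
    margD1 (piOf ν) z a y0 y1 = ∑ g, if g z a = true then ν y0 y1 g else 0 := by
  calc margD1 (piOf ν) z a y0 y1
      = ∑ d0 : Bool, ∑ d1 : Bool,
          (if (if a then d1 else d0) = true then (1:ℝ) else 0) * piOf ν z y0 y1 d0 d1 := by
        unfold margD1
        refine Finset.sum_congr rfl fun d0 _ => Finset.sum_congr rfl fun d1 _ => ?_
        by_cases hc : (if a then d1 else d0) = true <;> simp [hc]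
    _ = ∑ g, (if (if a then g z true else g z false) = true then (1:ℝ) else 0) * ν y0 y1 g :=
        (sum_g_split ν z (fun d0 d1 => if (if a then d1 else d0) = true then (1:ℝ) else 0) y0 y1).symm
    _ = ∑ g, if g z a = true then ν y0 y1 g else 0 := by
        refine Finset.sum_congr rfl fun g _ => ?_
        cases a <;> by_cases hc : True <;> simp [ite_mul]

lemma piOf_rowsum (z : Fin K) (d0 : Bool) (y0 y1 : Y) :
    (∑ d1 : Bool, piOf ν z y0 y1 d0 d1) = ∑ g, if g z false = d0 then ν y0 y1 g else 0 := by
  unfold piOf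
  rw [Finset.sum_comm]
  refine Finset.sum_congr rfl fun g _ => ?_
  rcases h1 : g z true <;> simp [Fintype.sum_bool, h1]

lemma piOf_colsum (z : Fin K) (d1 : Bool) (y0 y1 : Y) :
    (∑ d0 : Bool, piOf ν z y0 y1 d0 d1) = ∑ g, if g z true = d1 then ν y0 y1 g else 0 := by
  unfold piOf
  rw [Finset.sum_comm]
  refine Finset.sum_congr rfl fun g _ => ?_
  rcases h0 : g z false <;> simp [Fintype.sum_bool, h0]

lemma piOf_sum (z : Fin K) (y0 y1 : Y) :
    (∑ d0 : Bool, ∑ d1 : Bool, piOf ν z y0 y1 d0 d1) = ∑ g, ν y0 y1 g := by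
  have h := sum_g_split ν z (fun _ _ => (1:ℝ)) y0 y1
  simpa using h.symm

set_option maxHeartbeats 1000000 in
lemma marginal_eq (hf : prodForm P Ps ν) (z : Fin K) (y0 y1 : Y) (d0 d1 : Bool) :
    marginal Ps z y0 y1 d0 d1 = piOf ν z y0 y1 d0 d1 := by
  unfold marginal
  have hs : {ω : Prim Y K | ω.1 = y0 ∧ ω.2.1 = y1 ∧ pd ω z false = d0 ∧ pd ω z true = d1}
      = {ω : Prim Y K | (fun a b g => a = y0 ∧ b = y1 ∧ (g z false = d0 ∧ g z true = d1))
          ω.1 ω.2.1 ω.2.2.1} := by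
    ext ω; simp [pd, and_assoc]
  have h1 := pr_cyl hf (fun a b g => a = y0 ∧ b = y1 ∧ (g z false = d0 ∧ g z true = d1))
  have h2 := sum_collapse2 y0 y1 (fun g => g z false = d0 ∧ g z true = d1)
    (fun a b g => ν a b g)
  rw [hs, h1, h2]
  unfold piOf
  exact Finset.sum_congr rfl fun g _ => by
    by_cases h : g z false = d0 ∧ g z true = d1 <;> simp [h]

lemma theta_eq (hf : prodForm P Ps ν) : theta Ps = objective P (piOf ν) := by
  have hfac : ∀ (y0 y1 : Y) (g : Fin K → Bool → Bool) (z : Fin K),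
      Ps.p (y0, y1, g, z) = ν y0 y1 g * prZ P z := hf
  have hR : ∀ (z : Fin K) (y0 y1 : Y),
      (∑ d0 : Bool, ∑ d1 : Bool, (if d1 then (y1:ℝ) else (y0:ℝ)) * piOf ν z y0 y1 d0 d1)
        = ∑ g : Fin K → Bool → Bool, (if g z true then (y1:ℝ) else (y0:ℝ)) * ν y0 y1 g :=
    fun z y0 y1 => (sum_g_split ν z (fun _ d1 => if d1 then (y1:ℝ) else (y0:ℝ)) y0 y1).symm
  have hobj : objective P (piOf ν)
      = ∑ z : Fin K, ∑ y0 : Y, ∑ y1 : Y, ∑ g : Fin K → Bool → Bool,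
          prZ P z * ((if g z true then (y1:ℝ) else (y0:ℝ)) * ν y0 y1 g) := by
    unfold objective
    refine Finset.sum_congr rfl fun z _ => ?_
    rw [show (∑ y0 : Y, ∑ y1 : Y, ∑ d0 : Bool, ∑ d1 : Bool,
          (if d1 then (y1:ℝ) else (y0:ℝ)) * piOf ν z y0 y1 d0 d1)
        = ∑ y0 : Y, ∑ y1 : Y, ∑ g : Fin K → Bool → Bool,
            (if g z true then (y1:ℝ) else (y0:ℝ)) * ν y0 y1 g from
      Finset.sum_congr rfl fun y0 _ => Finset.sum_congr rfl fun y1 _ => hR z y0 y1]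
    simp only [Finset.mul_sum]
  rw [hobj]
  unfold theta Dist.exp
  simp only [Fintype.sum_prod_type]
  calc (∑ y0 : Y, ∑ y1 : Y, ∑ g : Fin K → Bool → Bool, ∑ z : Fin K,
          Ps.p (y0, y1, g, z) * cfY (y0, y1, g, z))
      = ∑ y0 : Y, ∑ y1 : Y, ∑ z : Fin K, ∑ g : Fin K → Bool → Bool,
          Ps.p (y0, y1, g, z) * cfY (y0, y1, g, z) :=
        Finset.sum_congr rfl fun y0 _ => Finset.sum_congr rfl fun y1 _ => Finset.sum_comm
    _ = ∑ y0 : Y, ∑ z : Fin K, ∑ y1 : Y, ∑ g : Fin K → Bool → Bool,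
          Ps.p (y0, y1, g, z) * cfY (y0, y1, g, z) :=
        Finset.sum_congr rfl fun y0 _ => Finset.sum_comm
    _ = ∑ z : Fin K, ∑ y0 : Y, ∑ y1 : Y, ∑ g : Fin K → Bool → Bool,
          Ps.p (y0, y1, g, z) * cfY (y0, y1, g, z) := Finset.sum_comm
    _ = ∑ z : Fin K, ∑ y0 : Y, ∑ y1 : Y, ∑ g : Fin K → Bool → Bool,
          prZ P z * ((if g z true then (y1:ℝ) else (y0:ℝ)) * ν y0 y1 g) := by
        refine Finset.sum_congr rfl fun z _ => Finset.sum_congr rfl fun y0 _ =>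
          Finset.sum_congr rfl fun y1 _ => Finset.sum_congr rfl fun g _ => ?_
        rw [hfac]
        simp only [cfY, pd, pz]
        by_cases hgz : g z true = true <;> simp only [hgz, if_true, if_false, Bool.false_eq_true] <;> ring

end ProductForm




section Events
variable {Y : Finset ℝ} {K : ℕ} {P : Dist (Obs Y K)} {Ps : Dist (Prim Y K)}
  {ν : Y → Y → (Fin K → Bool → Bool) → ℝ}

lemma sum_collapse_mid {G : Type*} [Fintype G] (y : Y) (C : G → Prop) [∀ g, Decidable (C g)]
    (f : Y → Y → G → ℝ) [∀ (b : Y) (g : G), Decidable (b = y ∧ C g)] :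
    (∑ a : Y, ∑ b : Y, ∑ g : G, if b = y ∧ C g then f a b g else 0)
      = ∑ a : Y, ∑ g : G, if C g then f a y g else 0 := by
  refine Finset.sum_congr rfl fun a _ => ?_
  rw [Finset.sum_eq_single y]
  · refine Finset.sum_congr rfl fun g _ => ?_
    by_cases h : C g <;> simp [h]
  · intro b _ hb; exact Finset.sum_eq_zero fun g _ => by simp [hb]
  · intro h; exact absurd (Finset.mem_univ y) h

lemma sum_collapse_fst {G : Type*} [Fintype G] (y : Y) (C : G → Prop) [∀ g, Decidable (C g)]
    (f : Y → Y → G → ℝ) [∀ (a : Y) (g : G), Decidable (a = y ∧ C g)] :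
    (∑ a : Y, ∑ b : Y, ∑ g : G, if a = y ∧ C g then f a b g else 0)
      = ∑ b : Y, ∑ g : G, if C g then f y b g else 0 := by
  rw [Finset.sum_eq_single y]
  · refine Finset.sum_congr rfl fun b _ => Finset.sum_congr rfl fun g _ => ?_
    by_cases h : C g <;> simp [h]
  · intro a _ ha
    exact Finset.sum_eq_zero fun b _ => Finset.sum_eq_zero fun g _ => by simp [ha]
  · intro h; exact absurd (Finset.mem_univ y) h

lemma pr_good (hf : prodForm P Ps ν) (z : Fin K) :
    Ps.pr {ω : Prim Y K | pd ω z false ≤ pd ω z true}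
      = ∑ y0, ∑ y1, ∑ g, if g z false ≤ g z true then ν y0 y1 g else 0 := by
  have h1 := pr_cyl hf (fun (a b : Y) (g : Fin K → Bool → Bool) => g z false ≤ g z true)
  have hs : {ω : Prim Y K | pd ω z false ≤ pd ω z true}
      = {ω : Prim Y K | (fun (a b : Y) (g : Fin K → Bool → Bool) =>
          g z false ≤ g z true) ω.1 ω.2.1 ω.2.2.1} := rfl
  rw [hs, h1]

lemma pr_two (hf : prodForm P Ps ν) (z : Fin K) (a : Bool) (z' : Fin K) (a' : Bool) (e e' : Bool) :
    Ps.pr {ω : Prim Y K | pd ω z a = e ∧ pd ω z' a' = e'}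
      = ∑ y0, ∑ y1, ∑ g, if g z a = e ∧ g z' a' = e' then ν y0 y1 g else 0 := by
  have h1 := pr_cyl hf (fun (x y : Y) (g : Fin K → Bool → Bool) => g z a = e ∧ g z' a' = e')
  have hs : {ω : Prim Y K | pd ω z a = e ∧ pd ω z' a' = e'}
      = {ω : Prim Y K | (fun (x y : Y) (g : Fin K → Bool → Bool) =>
          g z a = e ∧ g z' a' = e') ω.1 ω.2.1 ω.2.2.1} := rfl
  rw [hs, h1]

lemma pr_one (hf : prodForm P Ps ν) (z : Fin K) (a : Bool) (e : Bool) :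
    Ps.pr {ω : Prim Y K | pd ω z a = e}
      = ∑ y0, ∑ y1, ∑ g, if g z a = e then ν y0 y1 g else 0 := by
  have h1 := pr_cyl hf (fun (x y : Y) (g : Fin K → Bool → Bool) => g z a = e)
  have hs : {ω : Prim Y K | pd ω z a = e}
      = {ω : Prim Y K | (fun (x y : Y) (g : Fin K → Bool → Bool) =>
          g z a = e) ω.1 ω.2.1 ω.2.2.1} := rfl
  rw [hs, h1]

lemma pr_obs_true (hf : prodForm P Ps ν) (y : Y) (z : Fin K) :
    Ps.pr {ω : Prim Y K | obsY ω = y ∧ obsD ω = true ∧ pz ω = z}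
      = prZ P z * ∑ y0 : Y, ∑ d1 : Bool, piOf ν z y0 y true d1 := by
  have hs : {ω : Prim Y K | obsY ω = y ∧ obsD ω = true ∧ pz ω = z}
      = {ω : Prim Y K | (fun (x w : Y) (g : Fin K → Bool → Bool) =>
          w = y ∧ g z false = true) ω.1 ω.2.1 ω.2.2.1 ∧ ω.2.2.2 = z} := by
    ext ω
    simp only [Set.mem_setOf_eq, obsY, obsD, pd, pz]
    constructor
    · rintro ⟨hy, hd, hz⟩
      simp only [hz] at hy hd
      simp only [hd, if_true] at hy
      exact ⟨⟨hy, hd⟩, hz⟩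
    · rintro ⟨⟨hy, hd⟩, hz⟩
      simp only [hz, hd, if_true]
      simp [hy]
  have h1 := pr_cylz hf (fun (x w : Y) (g : Fin K → Bool → Bool) =>
    w = y ∧ g z false = true) z
  rw [hs, h1, sum_collapse_mid y (fun g : Fin K → Bool → Bool => g z false = true)
    (fun a b g => ν a b g)]
  congr 1
  refine Finset.sum_congr rfl fun y0 _ => ?_
  exact (piOf_rowsum z true y0 y).symm

lemma pr_obs_false (hf : prodForm P Ps ν) (y : Y) (z : Fin K) :
    Ps.pr {ω : Prim Y K | obsY ω = y ∧ obsD ω = false ∧ pz ω = z}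
      = prZ P z * ∑ y1 : Y, ∑ d1 : Bool, piOf ν z y y1 false d1 := by
  have hs : {ω : Prim Y K | obsY ω = y ∧ obsD ω = false ∧ pz ω = z}
      = {ω : Prim Y K | (fun (x w : Y) (g : Fin K → Bool → Bool) =>
          x = y ∧ g z false = false) ω.1 ω.2.1 ω.2.2.1 ∧ ω.2.2.2 = z} := by
    ext ω
    simp only [Set.mem_setOf_eq, obsY, obsD, pd, pz]
    constructor
    · rintro ⟨hy, hd, hz⟩
      simp only [hz] at hy hd
      simp only [hd, Bool.false_eq_true, if_false] at hy
      exact ⟨⟨hy, hd⟩, hz⟩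
    · rintro ⟨⟨hy, hd⟩, hz⟩
      simp only [hz, hd, Bool.false_eq_true, if_false]
      simp [hy]
  have h1 := pr_cylz hf (fun (x w : Y) (g : Fin K → Bool → Bool) =>
    x = y ∧ g z false = false) z
  rw [hs, h1, sum_collapse_fst y (fun g : Fin K → Bool → Bool => g z false = false)
    (fun a b g => ν a b g)]
  congr 1
  refine Finset.sum_congr rfl fun y1 _ => ?_
  exact (piOf_rowsum z false y y1).symm

lemma gen_prZ (hgen : generates Ps P) (z : Fin K) :
    Ps.pr {ω : Prim Y K | ω.2.2.2 = z} = prZ P z := by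
  have hg : ∀ (y : Y) (d : Bool) (z : Fin K),
      P.p (y, d, z) = Ps.pr {ω | obsY ω = y ∧ obsD ω = d ∧ pz ω = z} := hgen
  have h1 : prZ P z = ∑ y : Y, ∑ d : Bool, P.p (y, d, z) := by
    unfold prZ Dist.pr
    simp only [Fintype.sum_prod_type, Set.mem_setOf_eq]
    refine Finset.sum_congr rfl fun y _ => Finset.sum_congr rfl fun d _ => ?_
    exact my_sum_ite_eq z (fun x => Iff.rfl) (fun x => P.p (y, d, x))
  rw [h1]
  simp only [hg]
  unfold Dist.pr
  symm
  refine Eq.trans (Finset.sum_congr rfl fun y _ => Finset.sum_comm) ?_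
  refine Eq.trans Finset.sum_comm ?_
  refine Finset.sum_congr rfl fun ω _ => ?_
  simp only [Set.mem_setOf_eq]
  by_cases hz : pz ω = z
  · rw [if_pos (show ω.2.2.2 = z from hz)]
    rw [Finset.sum_eq_single (obsY ω)
      (fun b _ hb => Finset.sum_eq_zero fun d _ => by simp [Ne.symm hb])
      (fun h => absurd (Finset.mem_univ _) h)]
    rw [Finset.sum_eq_single (obsD ω)
      (fun d _ hd => by simp [Ne.symm hd])
      (fun h => absurd (Finset.mem_univ _) h)]
    simp [hz]
  · rw [if_neg (show ¬ ω.2.2.2 = z from hz)]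
    exact Finset.sum_eq_zero fun y _ => Finset.sum_eq_zero fun d _ => by simp [hz]

lemma iv_prodForm (hIV : IVvalid Ps) (hgen : generates Ps P) :
    prodForm P Ps (fun y0 y1 g =>
      Ps.pr {ω : Prim Y K | ω.1 = y0 ∧ ω.2.1 = y1 ∧ ω.2.2.1 = g}) := by
  intro y0 y1 g z
  have hsing : {ω : Prim Y K | ω.1 = y0 ∧ ω.2.1 = y1 ∧ ω.2.2.1 = g ∧ ω.2.2.2 = z}
      = {(y0, y1, g, z)} := by
    ext ω
    obtain ⟨a, b, c, d⟩ := ω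
    simp [Prod.ext_iff]
  have h := hIV y0 y1 g z
  rw [hsing, pr_singleton] at h
  rw [h, gen_prZ hgen z]

end Events




section Forward
variable {Y : Finset ℝ} {K : ℕ} {P : Dist (Obs Y K)} {Ps : Dist (Prim Y K)}

lemma sum3_add (A B : Y → Y → (Fin K → Bool → Bool) → ℝ) :
    (∑ y0, ∑ y1, ∑ g, A y0 y1 g) + (∑ y0, ∑ y1, ∑ g, B y0 y1 g)
      = ∑ y0 : Y, ∑ y1 : Y, ∑ g : Fin K → Bool → Bool, (A y0 y1 g + B y0 y1 g) := by
  rw [← Finset.sum_add_distrib]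
  refine Finset.sum_congr rfl fun y0 _ => ?_
  rw [← Finset.sum_add_distrib]
  refine Finset.sum_congr rfl fun y1 _ => ?_
  rw [← Finset.sum_add_distrib]

lemma forward [NeZero K] (δ : Fin K → Fin K → Bool → Bool → ℝ)
    (hPz : ∀ z : Fin K, 0 < prZ P z)
    (hIV : IVvalid Ps) (hM : policyMono Ps) (hDB : disagBound δ Ps)
    (hgen : generates Ps P) :
    dbConstraints δ P (marginalColl Ps) ∧ theta Ps = objective P (marginalColl Ps) := by
  set ν : Y → Y → (Fin K → Bool → Bool) → ℝ :=
    fun y0 y1 g => Ps.pr {ω : Prim Y K | ω.1 = y0 ∧ ω.2.1 = y1 ∧ ω.2.2.1 = g} with hνdef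
  have hf : prodForm P Ps ν := iv_prodForm hIV hgen
  have hν0 : ∀ y0 y1 g, 0 ≤ ν y0 y1 g := fun _ _ _ => pr_nonneg _ _
  have hg : ∀ (y : Y) (d : Bool) (z : Fin K),
      P.p (y, d, z) = Ps.pr {ω | obsY ω = y ∧ obsD ω = d ∧ pz ω = z} := hgen
  have hmc : marginalColl Ps = piOf ν := by
    funext z y0 y1 d0 d1
    exact marginal_eq hf z y0 y1 d0 d1
  rw [hmc]
  constructor
  · refine ⟨?_, ?_, ?_, ?_, ?_, ?_, ?_⟩
    · -- consistency with policy monotonicity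
      intro z y0 y1
      have hgood : (∑ y0' : Y, ∑ y1' : Y, ∑ g : Fin K → Bool → Bool,
          if g z false ≤ g z true then ν y0' y1' g else 0) = 1 := by
        rw [← pr_good hf z]; exact hM z
      have htot := sum_nu_one hf
      have hbad : (∑ y0' : Y, ∑ y1' : Y, ∑ g : Fin K → Bool → Bool,
          if g z false = true ∧ g z true = false then ν y0' y1' g else 0) = 0 := by
        have hadd := sum3_add
          (fun y0' y1' g => if g z false ≤ g z true then ν y0' y1' g else 0)
          (fun y0' y1' g => if g z false = true ∧ g z true = false then ν y0' y1' g else 0)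
        have hpt : ∀ (y0' y1' : Y) (g : Fin K → Bool → Bool),
            ((if g z false ≤ g z true then ν y0' y1' g else 0)
              + (if g z false = true ∧ g z true = false then ν y0' y1' g else 0))
              = ν y0' y1' g := by
          intro y0' y1' g
          rcases hb : g z false <;> rcases hc : g z true <;> simp [hb, hc]
        rw [Finset.sum_congr rfl fun y0' _ => Finset.sum_congr rfl fun y1' _ =>
          Finset.sum_congr rfl fun g _ => hpt y0' y1' g, htot] at hadd
        linarith
      have hblock : ∀ y0' y1' : Y, 0 ≤ ∑ g : Fin K → Bool → Bool,
          if g z false = true ∧ g z true = false then ν y0' y1' g else 0 :=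
        fun y0' y1' => Finset.sum_nonneg fun g _ => by
          by_cases h : g z false = true ∧ g z true = false <;> simp [h, hν0]
      have hle : (∑ g : Fin K → Bool → Bool,
          if g z false = true ∧ g z true = false then ν y0 y1 g else 0)
            ≤ ∑ y0' : Y, ∑ y1' : Y, ∑ g : Fin K → Bool → Bool,
                if g z false = true ∧ g z true = false then ν y0' y1' g else 0 := by
        calc (∑ g : Fin K → Bool → Bool,
            if g z false = true ∧ g z true = false then ν y0 y1 g else 0)
            ≤ ∑ y1' : Y, ∑ g : Fin K → Bool → Bool,
                if g z false = true ∧ g z true = false then ν y0 y1' g else 0 :=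
              Finset.single_le_sum (fun y1' _ => hblock y0 y1') (Finset.mem_univ y1)
          _ ≤ _ := Finset.single_le_sum
              (fun y0' _ => Finset.sum_nonneg fun y1' _ => hblock y0' y1')
              (Finset.mem_univ y0)
      exact le_antisymm (le_of_le_of_eq hle hbad) (hblock y0 y1)
    · -- condition 1, treated
      intro y z
      have hPt : P.p (y, true, z) = prZ P z * ∑ y0 : Y, ∑ d1 : Bool, piOf ν z y0 y true d1 := by
        rw [hg]; exact pr_obs_true hf y z
      unfold obsCond
      rw [hPt, mul_comm, mul_div_assoc, div_self (ne_of_gt (hPz z)), mul_one]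
    · -- condition 1, untreated
      intro y z
      have hPt : P.p (y, false, z) = prZ P z * ∑ y1 : Y, ∑ d1 : Bool, piOf ν z y y1 false d1 := by
        rw [hg]; exact pr_obs_false hf y z
      unfold obsCond
      rw [hPt, mul_comm, mul_div_assoc, div_self (ne_of_gt (hPz z)), mul_one]
    · -- condition 2
      intro y0 y1 z
      rw [piOf_sum, piOf_sum]
    · -- nonnegativity
      intro z y0 y1 d0 d1
      exact Finset.sum_nonneg fun g _ => by
        by_cases h : g z false = d0 ∧ g z true = d1 <;> simp [h, hν0]
    · -- total mass one
      intro z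
      calc (∑ y0 : Y, ∑ y1 : Y, ∑ d0 : Bool, ∑ d1 : Bool, piOf ν z y0 y1 d0 d1)
          = ∑ y0 : Y, ∑ y1 : Y, ∑ g : Fin K → Bool → Bool, ν y0 y1 g :=
            Finset.sum_congr rfl fun y0 _ => Finset.sum_congr rfl fun y1 _ => piOf_sum z y0 y1
        _ = 1 := sum_nu_one hf
    · -- condition 4
      intro z z' a a'
      have hDB' := hDB z z' a a'
      rw [pr_two hf z a z' a' false true, pr_one hf z' a' true] at hDB'
      have hsplit : (∑ y0 : Y, ∑ y1 : Y, ∑ g : Fin K → Bool → Bool,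
            if g z' a' = true then ν y0 y1 g else 0)
          = (∑ y0 : Y, ∑ y1 : Y, ∑ g : Fin K → Bool → Bool,
              if g z a = true ∧ g z' a' = true then ν y0 y1 g else 0)
            + (∑ y0 : Y, ∑ y1 : Y, ∑ g : Fin K → Bool → Bool,
              if g z a = false ∧ g z' a' = true then ν y0 y1 g else 0) := by
        rw [sum3_add]
        refine Finset.sum_congr rfl fun y0 _ => Finset.sum_congr rfl fun y1 _ =>
          Finset.sum_congr rfl fun g _ => ?_
        rcases hA : g z a <;> simp [hA]
      have hminle : (∑ y0 : Y, ∑ y1 : Y, ∑ g : Fin K → Bool → Bool,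
            if g z a = true ∧ g z' a' = true then ν y0 y1 g else 0)
          ≤ ∑ y0 : Y, ∑ y1 : Y,
              min (margD1 (piOf ν) z a y0 y1) (margD1 (piOf ν) z' a' y0 y1) := by
        refine Finset.sum_le_sum fun y0 _ => Finset.sum_le_sum fun y1 _ => le_min ?_ ?_
        · rw [piOf_margD1]
          refine Finset.sum_le_sum fun g _ => ?_
          by_cases hA : g z a = true <;> by_cases hB : g z' a' = true <;>
            simp [hA, hB, hν0]
        · rw [piOf_margD1]
          refine Finset.sum_le_sum fun g _ => ?_
          by_cases hA : g z a = true <;> by_cases hB : g z' a' = true <;>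
            simp [hA, hB, hν0]
      have htotB : margD1tot (piOf ν) z' a' = ∑ y0 : Y, ∑ y1 : Y,
          ∑ g : Fin K → Bool → Bool, if g z' a' = true then ν y0 y1 g else 0 := by
        unfold margD1tot
        exact Finset.sum_congr rfl fun y0 _ => Finset.sum_congr rfl fun y1 _ =>
          piOf_margD1 z' a' y0 y1
      rw [ge_iff_le, htotB]
      nlinarith [hminle, hDB', hsplit]
  · exact theta_eq hf

end Forward




section Backward
variable {Y : Finset ℝ} {K : ℕ}

lemma margD1_false_val (π : Coll Y K) (z : Fin K) (y0 y1 : Y) :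
    margD1 π z false y0 y1 = π z y0 y1 true true + π z y0 y1 true false := by
  simp [margD1, Fintype.sum_bool]

lemma margD1_true_val (π : Coll Y K) (z : Fin K) (y0 y1 : Y) :
    margD1 π z true y0 y1 = π z y0 y1 true true + π z y0 y1 false true := by
  simp [margD1, Fintype.sum_bool]

lemma sum2_val (π : Coll Y K) (z : Fin K) (y0 y1 : Y) :
    (∑ d0 : Bool, ∑ d1 : Bool, π z y0 y1 d0 d1)
      = π z y0 y1 true true + π z y0 y1 true false
        + (π z y0 y1 false true + π z y0 y1 false false) := by
  simp [Fintype.sum_bool]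

lemma backward [NeZero K] (δ : Fin K → Fin K → Bool → Bool → ℝ) (P : Dist (Obs Y K))
    (hPz : ∀ z : Fin K, 0 < prZ P z) (π : Coll Y K) (hc : dbConstraints δ P π) :
    ∃ Ps : Dist (Prim Y K), IVvalid Ps ∧ policyMono Ps ∧ disagBound δ Ps ∧
      generates Ps P ∧ marginalColl Ps = π ∧ theta Ps = objective P π := by
  obtain ⟨hTF, h1t, h1f, h2, hpos, hsum, h4⟩ := hc
  set q : Y → Y → ℝ := fun y0 y1 => ∑ d0 : Bool, ∑ d1 : Bool, π 0 y0 y1 d0 d1 with hqdef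
  set pc : Y → Y → Fin K → Bool → ℝ := fun y0 y1 z a => margD1 π z a y0 y1 with hpdef
  have hp0 : ∀ y0 y1 z a, 0 ≤ pc y0 y1 z a := by
    intro y0 y1 z a
    simp only [hpdef]
    unfold margD1
    refine Finset.sum_nonneg fun d0 _ => Finset.sum_nonneg fun d1 _ => ?_
    by_cases h : (if a then d1 else d0) = true <;> simp [h, hpos]
  have hq0' : ∀ y0 y1, 0 ≤ q y0 y1 := by
    intro y0 y1
    simp only [hqdef]
    exact Finset.sum_nonneg fun d0 _ => Finset.sum_nonneg fun d1 _ => hpos 0 y0 y1 d0 d1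
  have hpq : ∀ y0 y1 z a, pc y0 y1 z a ≤ q y0 y1 := by
    intro y0 y1 z a
    simp only [hpdef, hqdef]
    rw [← h2 y0 y1 z]
    unfold margD1
    refine Finset.sum_le_sum fun d0 _ => Finset.sum_le_sum fun d1 _ => ?_
    by_cases h : (if a then d1 else d0) = true <;> simp [h, hpos]
  set ν : Y → Y → (Fin K → Bool → Bool) → ℝ :=
    fun y0 y1 g => cw (fun z a => pc y0 y1 z a) (q y0 y1) g with hνdef
  have hmono : ∀ y0 y1 z, pc y0 y1 z false ≤ pc y0 y1 z true := by
    intro y0 y1 z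
    simp only [hpdef]
    rw [margD1_false_val, margD1_true_val, hTF]
    have := hpos z y0 y1 false true
    linarith
  have hνπ : piOf ν = π := by
    funext z y0 y1 d0 d1
    have e1 : pc y0 y1 z false = π z y0 y1 true true := by
      simp only [hpdef]; rw [margD1_false_val, hTF, add_zero]
    have e2 : pc y0 y1 z true = π z y0 y1 true true + π z y0 y1 false true := by
      simp only [hpdef]; rw [margD1_true_val]
    have e3 : q y0 y1 = π z y0 y1 true true + π z y0 y1 true false
        + (π z y0 y1 false true + π z y0 y1 false false) := by
      simp only [hqdef]; rw [← h2 y0 y1 z, sum2_val]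
    have hm := hmono y0 y1 z
    show (∑ g, if g z false = d0 ∧ g z true = d1 then ν y0 y1 g else 0) = π z y0 y1 d0 d1
    simp only [hνdef]
    rcases d0 <;> rcases d1
    · rw [cw_ff (fun z' a' => hp0 y0 y1 z' a') (fun z' a' => hpq y0 y1 z' a') (hq0' y0 y1)
        z false z true, max_eq_right hm]
      rw [hTF z y0 y1] at e3
      linarith
    · rw [cw_ft (fun z' a' => hp0 y0 y1 z' a') (fun z' a' => hpq y0 y1 z' a') (hq0' y0 y1)
        z false z true, min_eq_left hm]
      linarith
    · rw [cw_tf (fun z' a' => hp0 y0 y1 z' a') (fun z' a' => hpq y0 y1 z' a') (hq0' y0 y1)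
        z false z true, min_eq_left hm]
      rw [hTF z y0 y1]
      linarith
    · rw [cw_tt (fun z' a' => hp0 y0 y1 z' a') (fun z' a' => hpq y0 y1 z' a') (hq0' y0 y1)
        z false z true, min_eq_left hm]
      linarith
  have hνtot : ∀ y0 y1 : Y, (∑ g : Fin K → Bool → Bool, ν y0 y1 g) = q y0 y1 := by
    intro y0 y1
    simp only [hνdef]
    exact cw_total (fun z' a' => hp0 y0 y1 z' a') (fun z' a' => hpq y0 y1 z' a') (hq0' y0 y1)
  have hν0 : ∀ (y0 y1 : Y) (g : Fin K → Bool → Bool), 0 ≤ ν y0 y1 g := by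
    intro y0 y1 g
    simp only [hνdef]
    exact cw_nonneg g
  have hsumq : ∑ y0 : Y, ∑ y1 : Y, q y0 y1 = 1 := by
    simp only [hqdef]
    exact hsum 0
  have hnn : ∀ ω : Prim Y K, 0 ≤ ν ω.1 ω.2.1 ω.2.2.1 * prZ P ω.2.2.2 :=
    fun ω => mul_nonneg (hν0 _ _ _) (prZ_nonneg P _)
  have hs1 : ∑ ω : Prim Y K, ν ω.1 ω.2.1 ω.2.2.1 * prZ P ω.2.2.2 = 1 := by
    simp only [Fintype.sum_prod_type]
    have hz : ∀ (y0 y1 : Y) (g : Fin K → Bool → Bool),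
        (∑ z : Fin K, ν y0 y1 g * prZ P z) = ν y0 y1 g := fun y0 y1 g => by
      rw [← Finset.mul_sum, sum_prZ, mul_one]
    rw [Finset.sum_congr rfl fun y0 _ => Finset.sum_congr rfl fun y1 _ =>
      Finset.sum_congr rfl fun g _ => hz y0 y1 g]
    rw [Finset.sum_congr rfl fun y0 _ => Finset.sum_congr rfl fun y1 _ => hνtot y0 y1]
    exact hsumq
  set Ps : Dist (Prim Y K) :=
    ⟨fun ω => ν ω.1 ω.2.1 ω.2.2.1 * prZ P ω.2.2.2, hnn, hs1⟩ with hPsdef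
  have hf : prodForm P Ps ν := fun y0 y1 g z => rfl
  have hmc : marginalColl Ps = π := by
    have : marginalColl Ps = piOf ν := by
      funext z y0 y1 d0 d1
      exact marginal_eq hf z y0 y1 d0 d1
    rw [this, hνπ]
  have hIV : IVvalid Ps := by
    intro a b g z
    have hsing : {ω : Prim Y K | ω.1 = a ∧ ω.2.1 = b ∧ ω.2.2.1 = g ∧ ω.2.2.2 = z}
        = {(a, b, g, z)} := by
      ext ω
      obtain ⟨x1, x2, x3, x4⟩ := ω
      simp [Prod.ext_iff]
    rw [hsing, pr_singleton]
    have h3 : Ps.pr {ω : Prim Y K | ω.1 = a ∧ ω.2.1 = b ∧ ω.2.2.1 = g} = ν a b g := by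
      have h1 := pr_cyl hf (fun (x y : Y) (w : Fin K → Bool → Bool) => x = a ∧ y = b ∧ w = g)
      have hss : {ω : Prim Y K | ω.1 = a ∧ ω.2.1 = b ∧ ω.2.2.1 = g}
          = {ω : Prim Y K | (fun (x y : Y) (w : Fin K → Bool → Bool) =>
              x = a ∧ y = b ∧ w = g) ω.1 ω.2.1 ω.2.2.1} := rfl
      rw [hss, h1, sum_collapse2 a b (fun w : Fin K → Bool → Bool => w = g)
        (fun x y w => ν x y w)]
      exact my_sum_ite_eq g (fun w => Iff.rfl) (fun w => ν a b w)
    have hz4 : Ps.pr {ω : Prim Y K | ω.2.2.2 = z} = prZ P z := by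
      have h1 := pr_cylz hf (fun (_ _ : Y) (_ : Fin K → Bool → Bool) => True) z
      have hss : {ω : Prim Y K | ω.2.2.2 = z}
          = {ω : Prim Y K | (fun (_ _ : Y) (_ : Fin K → Bool → Bool) => True)
              ω.1 ω.2.1 ω.2.2.1 ∧ ω.2.2.2 = z} := by
        ext ω; simp
      rw [hss, h1]
      have ht : (∑ y0 : Y, ∑ y1 : Y, ∑ g' : Fin K → Bool → Bool,
          if True then ν y0 y1 g' else 0) = 1 := by
        simp only [if_true]
        exact sum_nu_one hf
      rw [ht, mul_one]
    rw [h3, hz4]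
  have hM : policyMono Ps := by
    intro z
    rw [pr_good hf z]
    have hbad0 : ∀ y0 y1 : Y, (∑ g' : Fin K → Bool → Bool,
        if g' z false = true ∧ g' z true = false then ν y0 y1 g' else 0) = 0 := by
      intro y0 y1
      have hh : (∑ g' : Fin K → Bool → Bool,
          if g' z false = true ∧ g' z true = false then ν y0 y1 g' else 0)
            = piOf ν z y0 y1 true false := rfl
      rw [hh, hνπ]
      exact hTF z y0 y1
    have hppt : ∀ (y0 y1 : Y) (g' : Fin K → Bool → Bool),
        (if g' z false ≤ g' z true then ν y0 y1 g' else 0)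
          = ν y0 y1 g' - (if g' z false = true ∧ g' z true = false then ν y0 y1 g' else 0) := by
      intro y0 y1 g'
      rcases hb : g' z false <;> rcases hcc : g' z true <;> simp [hb, hcc]
    have hgd : ∀ y0 y1 : Y, (∑ g' : Fin K → Bool → Bool,
        if g' z false ≤ g' z true then ν y0 y1 g' else 0) = ∑ g', ν y0 y1 g' := by
      intro y0 y1
      rw [Finset.sum_congr rfl fun g' _ => hppt y0 y1 g', Finset.sum_sub_distrib,
        hbad0 y0 y1, sub_zero]
    rw [Finset.sum_congr rfl fun y0 _ => Finset.sum_congr rfl fun y1 _ => hgd y0 y1]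
    exact sum_nu_one hf
  have hDB : disagBound δ Ps := by
    intro z z' a a'
    rw [pr_two hf z a z' a' false true, pr_one hf z' a' true]
    have hft : ∀ y0 y1 : Y, (∑ g' : Fin K → Bool → Bool,
        if g' z a = false ∧ g' z' a' = true then ν y0 y1 g' else 0)
          = pc y0 y1 z' a' - min (pc y0 y1 z a) (pc y0 y1 z' a') := by
      intro y0 y1
      simp only [hνdef]
      exact cw_ft (fun w b => hp0 y0 y1 w b) (fun w b => hpq y0 y1 w b) (hq0' y0 y1) z a z' a'
    have htr : ∀ y0 y1 : Y, (∑ g' : Fin K → Bool → Bool,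
        if g' z' a' = true then ν y0 y1 g' else 0) = pc y0 y1 z' a' := by
      intro y0 y1
      simp only [hνdef]
      exact cw_true (fun w b => hp0 y0 y1 w b) (fun w b => hpq y0 y1 w b) (hq0' y0 y1) z' a'
    rw [Finset.sum_congr rfl fun y0 _ => Finset.sum_congr rfl fun y1 _ => hft y0 y1,
      Finset.sum_congr rfl fun y0 _ => Finset.sum_congr rfl fun y1 _ => htr y0 y1]
    simp only [Finset.sum_sub_distrib]
    have h4' := h4 z z' a a'
    unfold margD1tot at h4'
    simp only [hpdef]
    linarith
  have hgen : generates Ps P := by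
    intro y d z
    rcases d
    · rw [pr_obs_false hf y z, hνπ, ← h1f y z]
      unfold obsCond
      rw [mul_comm, div_mul_cancel₀ _ (ne_of_gt (hPz z))]
    · rw [pr_obs_true hf y z, hνπ, ← h1t y z]
      unfold obsCond
      rw [mul_comm, div_mul_cancel₀ _ (ne_of_gt (hPz z))]
  have hth : theta Ps = objective P π := by
    rw [theta_eq hf, hνπ]
  exact ⟨Ps, hIV, hM, hDB, hgen, hmc, hth⟩

end Backward




section Convexity
variable {Y : Finset ℝ} {K : ℕ}

lemma sum2_lin {α β : Type*} [Fintype α] [Fintype β] (a b : ℝ) (f g : α → β → ℝ) :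
    (∑ x, ∑ y, (a * f x y + b * g x y)) = a * (∑ x, ∑ y, f x y) + b * (∑ x, ∑ y, g x y) := by
  symm
  simp only [Finset.mul_sum, ← Finset.sum_add_distrib]

lemma sum4_lin {α β γ ε : Type*} [Fintype α] [Fintype β] [Fintype γ] [Fintype ε] (a b : ℝ)
    (w f g : α → β → γ → ε → ℝ) :
    (∑ x, ∑ y, ∑ u, ∑ v, w x y u v * (a * f x y u v + b * g x y u v))
      = a * (∑ x, ∑ y, ∑ u, ∑ v, w x y u v * f x y u v)
        + b * (∑ x, ∑ y, ∑ u, ∑ v, w x y u v * g x y u v) := by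
  symm
  simp only [Finset.mul_sum, ← Finset.sum_add_distrib]
  exact Finset.sum_congr rfl fun x _ => Finset.sum_congr rfl fun y _ =>
    Finset.sum_congr rfl fun u _ => Finset.sum_congr rfl fun v _ => by ring

lemma coll_ev (a b : ℝ) (π1 π2 : Coll Y K) (z : Fin K) (y0 y1 : Y) (d0 d1 : Bool) :
    (a • π1 + b • π2) z y0 y1 d0 d1 = a * π1 z y0 y1 d0 d1 + b * π2 z y0 y1 d0 d1 := by
  simp [Pi.add_apply, Pi.smul_apply, smul_eq_mul]

lemma margD1_lin (a b : ℝ) (π1 π2 : Coll Y K) (z : Fin K) (aa : Bool) (y0 y1 : Y) :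
    margD1 (a • π1 + b • π2) z aa y0 y1
      = a * margD1 π1 z aa y0 y1 + b * margD1 π2 z aa y0 y1 := by
  unfold margD1
  rw [Finset.sum_congr rfl fun d0 _ => Finset.sum_congr rfl fun d1 _ =>
    (by by_cases h : (if aa then d1 else d0) = true <;> simp [h, coll_ev] :
      (if (if aa then d1 else d0) = true then (a • π1 + b • π2) z y0 y1 d0 d1 else 0)
        = a * (if (if aa then d1 else d0) = true then π1 z y0 y1 d0 d1 else 0)
          + b * (if (if aa then d1 else d0) = true then π2 z y0 y1 d0 d1 else 0)), sum2_lin]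

set_option maxHeartbeats 1600000 in
lemma objective_lin (P : Dist (Obs Y K)) (a b : ℝ) (π1 π2 : Coll Y K) :
    objective P (a • π1 + b • π2) = a * objective P π1 + b * objective P π2 := by
  unfold objective
  have hz : ∀ z : Fin K,
      prZ P z * (∑ y0 : Y, ∑ y1 : Y, ∑ d0 : Bool, ∑ d1 : Bool,
        (if d1 then (y1:ℝ) else (y0:ℝ)) * (a • π1 + b • π2) z y0 y1 d0 d1)
      = a * (prZ P z * ∑ y0 : Y, ∑ y1 : Y, ∑ d0 : Bool, ∑ d1 : Bool,
          (if d1 then (y1:ℝ) else (y0:ℝ)) * π1 z y0 y1 d0 d1)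
        + b * (prZ P z * ∑ y0 : Y, ∑ y1 : Y, ∑ d0 : Bool, ∑ d1 : Bool,
          (if d1 then (y1:ℝ) else (y0:ℝ)) * π2 z y0 y1 d0 d1) := by
    intro z
    have hin : (∑ y0 : Y, ∑ y1 : Y, ∑ d0 : Bool, ∑ d1 : Bool,
        (if d1 then (y1:ℝ) else (y0:ℝ)) * (a • π1 + b • π2) z y0 y1 d0 d1)
        = a * (∑ y0 : Y, ∑ y1 : Y, ∑ d0 : Bool, ∑ d1 : Bool,
            (if d1 then (y1:ℝ) else (y0:ℝ)) * π1 z y0 y1 d0 d1)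
          + b * (∑ y0 : Y, ∑ y1 : Y, ∑ d0 : Bool, ∑ d1 : Bool,
            (if d1 then (y1:ℝ) else (y0:ℝ)) * π2 z y0 y1 d0 d1) := by
      have hpt : ∀ (y0 y1 : Y) (d0 d1 : Bool),
          (if d1 then (y1:ℝ) else (y0:ℝ)) * (a • π1 + b • π2) z y0 y1 d0 d1
            = a * ((if d1 then (y1:ℝ) else (y0:ℝ)) * π1 z y0 y1 d0 d1)
              + b * ((if d1 then (y1:ℝ) else (y0:ℝ)) * π2 z y0 y1 d0 d1) := by
        intro y0 y1 d0 d1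
        rw [coll_ev]
        ring
      have hin2 : ∀ y0 y1 : Y,
          (∑ d0 : Bool, ∑ d1 : Bool,
              (if d1 then (y1:ℝ) else (y0:ℝ)) * (a • π1 + b • π2) z y0 y1 d0 d1)
            = a * (∑ d0 : Bool, ∑ d1 : Bool,
                (if d1 then (y1:ℝ) else (y0:ℝ)) * π1 z y0 y1 d0 d1)
              + b * (∑ d0 : Bool, ∑ d1 : Bool,
                (if d1 then (y1:ℝ) else (y0:ℝ)) * π2 z y0 y1 d0 d1) := by
        intro y0 y1
        rw [Finset.sum_congr rfl fun d0 _ => Finset.sum_congr rfl fun d1 _ => hpt y0 y1 d0 d1,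
          sum2_lin]
      rw [Finset.sum_congr rfl fun y0 _ => Finset.sum_congr rfl fun y1 _ => hin2 y0 y1, sum2_lin]
    rw [hin]
    ring
  rw [Finset.sum_congr rfl fun z _ => hz z, Finset.sum_add_distrib,
    ← Finset.mul_sum, ← Finset.mul_sum]

lemma dbConstraints_convex [NeZero K] (δ : Fin K → Fin K → Bool → Bool → ℝ)
    (P : Dist (Obs Y K)) {π1 π2 : Coll Y K}
    (h1 : dbConstraints δ P π1) (h2 : dbConstraints δ P π2) {a b : ℝ}
    (ha : 0 ≤ a) (hb : 0 ≤ b) (hab : a + b = 1) :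
    dbConstraints δ P (a • π1 + b • π2) := by
  obtain ⟨hTF1, h1t1, h1f1, h21, hpos1, hsum1, h41⟩ := h1
  obtain ⟨hTF2, h1t2, h1f2, h22, hpos2, hsum2, h42⟩ := h2
  refine ⟨?_, ?_, ?_, ?_, ?_, ?_, ?_⟩
  · intro z y0 y1
    rw [coll_ev, hTF1, hTF2]
    ring
  · intro y z
    rw [Finset.sum_congr rfl fun y0 _ => Finset.sum_congr rfl fun d1 _ =>
      coll_ev a b π1 π2 z y0 y true d1, sum2_lin, ← h1t1 y z, ← h1t2 y z]
    have : a * obsCond P y true z + b * obsCond P y true z = (a + b) * obsCond P y true z := by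
      ring
    rw [this, hab, one_mul]
  · intro y z
    rw [Finset.sum_congr rfl fun y1 _ => Finset.sum_congr rfl fun d1 _ =>
      coll_ev a b π1 π2 z y y1 false d1, sum2_lin, ← h1f1 y z, ← h1f2 y z]
    have : a * obsCond P y false z + b * obsCond P y false z
        = (a + b) * obsCond P y false z := by ring
    rw [this, hab, one_mul]
  · intro y0 y1 z
    rw [Finset.sum_congr rfl fun d0 _ => Finset.sum_congr rfl fun d1 _ =>
      coll_ev a b π1 π2 z y0 y1 d0 d1, sum2_lin, h21 y0 y1 z, h22 y0 y1 z,
      Finset.sum_congr rfl fun d0 _ => Finset.sum_congr rfl fun d1 _ =>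
      coll_ev a b π1 π2 0 y0 y1 d0 d1, sum2_lin]
  · intro z y0 y1 d0 d1
    rw [coll_ev]
    exact add_nonneg (mul_nonneg ha (hpos1 z y0 y1 d0 d1)) (mul_nonneg hb (hpos2 z y0 y1 d0 d1))
  · intro z
    have hin : ∀ y0 y1 : Y, (∑ d0 : Bool, ∑ d1 : Bool, (a • π1 + b • π2) z y0 y1 d0 d1)
        = a * (∑ d0 : Bool, ∑ d1 : Bool, π1 z y0 y1 d0 d1)
          + b * (∑ d0 : Bool, ∑ d1 : Bool, π2 z y0 y1 d0 d1) := by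
      intro y0 y1
      rw [Finset.sum_congr rfl fun d0 _ => Finset.sum_congr rfl fun d1 _ =>
        coll_ev a b π1 π2 z y0 y1 d0 d1, sum2_lin]
    rw [Finset.sum_congr rfl fun y0 _ => Finset.sum_congr rfl fun y1 _ => hin y0 y1,
      sum2_lin, hsum1 z, hsum2 z]
    linarith
  · intro z z' aa aa'
    have hml : ∀ y0 y1 : Y,
        a * min (margD1 π1 z aa y0 y1) (margD1 π1 z' aa' y0 y1)
          + b * min (margD1 π2 z aa y0 y1) (margD1 π2 z' aa' y0 y1)
        ≤ min (margD1 (a • π1 + b • π2) z aa y0 y1)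
            (margD1 (a • π1 + b • π2) z' aa' y0 y1) := by
      intro y0 y1
      rw [margD1_lin, margD1_lin]
      refine le_min ?_ ?_
      · have u1 := min_le_left (margD1 π1 z aa y0 y1) (margD1 π1 z' aa' y0 y1)
        have u2 := min_le_left (margD1 π2 z aa y0 y1) (margD1 π2 z' aa' y0 y1)
        nlinarith
      · have u1 := min_le_right (margD1 π1 z aa y0 y1) (margD1 π1 z' aa' y0 y1)
        have u2 := min_le_right (margD1 π2 z aa y0 y1) (margD1 π2 z' aa' y0 y1)
        nlinarith
    have hstep : a * (∑ y0 : Y, ∑ y1 : Y, min (margD1 π1 z aa y0 y1) (margD1 π1 z' aa' y0 y1))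
          + b * (∑ y0 : Y, ∑ y1 : Y, min (margD1 π2 z aa y0 y1) (margD1 π2 z' aa' y0 y1))
        ≤ ∑ y0 : Y, ∑ y1 : Y, min (margD1 (a • π1 + b • π2) z aa y0 y1)
            (margD1 (a • π1 + b • π2) z' aa' y0 y1) := by
      rw [← sum2_lin]
      exact Finset.sum_le_sum fun y0 _ => Finset.sum_le_sum fun y1 _ => hml y0 y1
    have htot : margD1tot (a • π1 + b • π2) z' aa'
        = a * margD1tot π1 z' aa' + b * margD1tot π2 z' aa' := by
      unfold margD1tot
      rw [Finset.sum_congr rfl fun y0 _ => Finset.sum_congr rfl fun y1 _ =>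
        margD1_lin a b π1 π2 z' aa' y0 y1, sum2_lin]
    rw [ge_iff_le, htot]
    have k1 := mul_le_mul_of_nonneg_left (h41 z z' aa aa') ha
    have k2 := mul_le_mul_of_nonneg_left (h42 z z' aa aa') hb
    have hexp : (1 - δ z z' aa aa') * (a * margD1tot π1 z' aa' + b * margD1tot π2 z' aa')
        = a * ((1 - δ z z' aa aa') * margD1tot π1 z' aa')
          + b * ((1 - δ z z' aa aa') * margD1tot π2 z' aa') := by ring
    rw [hexp]
    linarith
end Convexity


end Aux

/-- Corollary 2: with IV validity, policy monotonicity,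
disagreement bounds and convex marginal restrictions `ℛ*`, the identified set for
`θ` is an interval whose endpoints are the optimal values of the linear program
over collections of marginals subject to conditions (1)–(4). -/
theorem statement5 {Y : Finset ℝ} {K : ℕ} [NeZero K]
    (δ : Fin K → Fin K → Bool → Bool → ℝ)
    (hδ : ∀ (z z' : Fin K) (a a' : Bool), δ z z' a a' ∈ Set.Icc (0 : ℝ) 1)
    (P : Dist (Obs Y K)) (hPz : ∀ z : Fin K, 0 < prZ P z)
    (R : Set (Coll Y K)) (hR : Convex ℝ R) :
    Convex ℝ (ThetaI P
        {Ps | (IVvalid Ps ∧ policyMono Ps ∧ disagBound δ Ps) ∧ marginalColl Ps ∈ R}) ∧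
    sSup (ThetaI P
        {Ps | (IVvalid Ps ∧ policyMono Ps ∧ disagBound δ Ps) ∧ marginalColl Ps ∈ R})
      = sSup (objective P '' {π | π ∈ R ∧ dbConstraints δ P π}) ∧
    sInf (ThetaI P
        {Ps | (IVvalid Ps ∧ policyMono Ps ∧ disagBound δ Ps) ∧ marginalColl Ps ∈ R})
      = sInf (objective P '' {π | π ∈ R ∧ dbConstraints δ P π}) := by
  have hset : ThetaI P
      {Ps | (IVvalid Ps ∧ policyMono Ps ∧ disagBound δ Ps) ∧ marginalColl Ps ∈ R}
      = objective P '' {π | π ∈ R ∧ dbConstraints δ P π} := by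
    ext t
    constructor
    · rintro ⟨Ps, ⟨⟨hIV, hM, hDB⟩, hRm⟩, hgen, rfl⟩
      obtain ⟨hdb, hobj⟩ := forward δ hPz hIV hM hDB hgen
      exact ⟨marginalColl Ps, ⟨hRm, hdb⟩, hobj.symm⟩
    · rintro ⟨π, ⟨hRmem, hdb⟩, rfl⟩
      obtain ⟨Ps, hIV, hM, hDB, hgen, hmc, hth⟩ := backward δ P hPz π hdb
      exact ⟨Ps, ⟨⟨hIV, hM, hDB⟩, by rw [hmc]; exact hRmem⟩, hgen, hth⟩
  have himg : Convex ℝ (objective P '' {π | π ∈ R ∧ dbConstraints δ P π}) := by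
    rintro t1 ⟨π1, ⟨hR1, hc1⟩, rfl⟩ t2 ⟨π2, ⟨hR2, hc2⟩, rfl⟩ a b ha hb hab
    refine ⟨a • π1 + b • π2,
      ⟨hR hR1 hR2 ha hb hab, dbConstraints_convex δ P hc1 hc2 ha hb hab⟩, ?_⟩
    rw [objective_lin]
    simp [smul_eq_mul]
  rw [hset]
  exact ⟨himg, rfl, rfl⟩

end IVPol
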